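/- For every odd natural number m and every w ≥ 1, the map x ↦ T_m(x) mod 2^w is a bijection on ℤ/2^wℤ. -/

import Mathlib

open Polynomial Polynomial.Chebyshev in
lemma T_zmod2_odd : ∀ k : ℤ, T (ZMod 2) (2*k+1) = X := by
  have h2z : (2:(ZMod 2)[X]) = 0 := by
    rw [← map_ofNat (Polynomial.C (R := ZMod 2)) 2, show ((2:ZMod 2))=0 by decide, map_zero]
  have h2 : ∀ n : ℤ, T (ZMod 2) (n+2) = T (ZMod 2) n := by
    intro n
    rw [T_add_two (ZMod 2) n, h2z]
    ring_nf
    rw [neg_eq_iff_add_eq_zero, ← two_mul, h2z, zero_mul]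
  intro k
  induction k using Int.induction_on with
  | zero => simp [T_one]
  | succ n ih => rw [show 2*((n:ℤ)+1)+1 = (2*n+1)+2 by ring, h2, ih]
  | pred n ih => rw [show 2*(-(n:ℤ)-1)+1 = (2*(-n:ℤ)+1)-2 by ring]
                 rw [← h2, sub_add_cancel]
                 simpa using ih

open Polynomial Polynomial.Chebyshev in
/-- For every odd natural number `m` and every `w ≥ 1`, the map `x ↦ T_m(x)` is a
bijection on `ℤ/2^wℤ`. -/
theorem chebyshev_odd_bijective (m w : ℕ) (hm : Odd m) (hw : 1 ≤ w) :
    Function.Bijective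
      (fun x : ZMod (2 ^ w) => (Polynomial.Chebyshev.T (ZMod (2 ^ w)) (m : ℤ)).eval x) := by
  have : NeZero (2 ^ w) := ⟨by positivity⟩
  rw [← Finite.injective_iff_bijective]
  -- step 1: over ℤ, T m = X + 2 * P
  obtain ⟨k, hk⟩ := hm
  have hTX : T (ZMod 2) (m:ℤ) = X := by
    rw [show ((m:ℤ)) = 2*(k:ℤ)+1 by exact_mod_cast hk]
    exact T_zmod2_odd k
  have hdvd : Polynomial.C (2:ℤ) ∣ (T ℤ (m:ℤ) - X) := by
    rw [C_dvd_iff_dvd_coeff]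
    intro i
    have hmap : Polynomial.map (Int.castRingHom (ZMod 2)) (T ℤ (m:ℤ) - X) = 0 := by
      rw [Polynomial.map_sub, map_T, map_X, hTX, sub_self]
    have := Polynomial.ext_iff.mp hmap i
    rw [Polynomial.coeff_map, Polynomial.coeff_zero] at this
    exact (ZMod.intCast_zmod_eq_zero_iff_dvd _ 2).mp this
  obtain ⟨P, hP⟩ := hdvd
  have hP' : T ℤ (m:ℤ) = X + Polynomial.C (2:ℤ) * P := by linear_combination hP
  -- push to ZMod (2^w)
  set R := ZMod (2 ^ w)
  set Q : R[X] := P.map (Int.castRingHom R) with hQ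
  have hTR : T R (m:ℤ) = X + Polynomial.C (2:R) * Q := by
    have := congrArg (Polynomial.map (Int.castRingHom R)) hP'
    rwa [map_T, Polynomial.map_add, Polynomial.map_mul, Polynomial.map_C, map_X,
      map_ofNat] at this
  intro x y h
  simp only [show T (ZMod (2 ^ w)) (m:ℤ) = X + Polynomial.C (2:R) * Q from hTR, Polynomial.eval_add, Polynomial.eval_mul, Polynomial.eval_C,
    Polynomial.eval_X] at h
  obtain ⟨q, hq⟩ := sub_dvd_eval_sub x y Q
  have key : (x - y) * (1 + 2 * q) = 0 := by linear_combination h - 2 * hq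
  have hnil : IsNilpotent ((2:R) * q) := by
    refine ⟨w, ?_⟩
    rw [mul_pow]
    have : (2:R)^w = 0 := by
      have := ZMod.natCast_self (2 ^ w)
      push_cast at this
      exact this
    rw [this, zero_mul]
  have hu : IsUnit (1 + (2:R) * q) := hnil.isUnit_one_add
  rw [mul_comm] at key
  have := (hu.mul_right_eq_zero).mp key
  exact sub_eq_zero.mp this
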